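/- Let R = F₂ + uF₂ be the ring F₂[u]/(u²) and let φ : Rⁿ → F₂^{2n} be the Gray map sending the vector with coordinates aᵢ + bᵢu (aᵢ, bᵢ ∈ F₂) to (b₁, …, bₙ, a₁ + b₁, …, aₙ + bₙ). If C ⊆ Rⁿ is a self-dual code, then its image φ(C), which is an F₂-subspace of F₂^{2n}, is a self-dual binary code of length 2n. -/

import Mathlib

/-- The dual of a code (submodule of `ι → K`) w.r.t. the Euclidean inner product. -/
def dualCode {K : Type*} [CommRing K] {ι : Type*} [Fintype ι]
    (C : Submodule K (ι → K)) : Submodule K (ι → K) where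
  carrier := {x | ∀ y ∈ C, ∑ i, x i * y i = 0}
  zero_mem' := by intro y _; simp
  add_mem' := by
    intro a b ha hb y hy
    simp only [Set.mem_setOf_eq] at ha hb ⊢
    simp [Pi.add_apply, add_mul, Finset.sum_add_distrib, ha y hy, hb y hy]
  smul_mem' := by
    intro c a ha y hy
    simp only [Set.mem_setOf_eq] at ha ⊢
    simp [Pi.smul_apply, smul_eq_mul, mul_assoc, ← Finset.mul_sum, ha y hy]

/-- The code generated by the block matrix `(I | M)`: the row space
`{(x, Mᵀx) : x ∈ K^ι}` inside `K^(ι ⊕ ι)`. -/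
def genCode {K : Type*} [CommRing K] {ι : Type*} [Fintype ι]
    (M : Matrix ι ι K) : Submodule K (ι ⊕ ι → K) where
  carrier := {v | ∃ x : ι → K, v = Sum.elim x (Matrix.mulVec (Matrix.transpose M) x)}
  zero_mem' := ⟨0, by funext s; cases s <;> simp [Matrix.mulVec_zero]⟩
  add_mem' := by
    rintro a b ⟨x, rfl⟩ ⟨y, rfl⟩
    exact ⟨x + y, by funext s; cases s <;> simp [Matrix.mulVec_add]⟩
  smul_mem' := by
    rintro c a ⟨x, rfl⟩
    exact ⟨c • x, by funext s; cases s <;> simp [Matrix.mulVec_smul]⟩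

/-- The Gray map `(F₂ + uF₂)ⁿ → F₂^{2n}` sending `a + bu ↦ (b, a + b)`
coordinatewise, where `F₂ + uF₂` is realized as the dual numbers over `ZMod 2`
(so `a = fst`, `b = snd`). -/
def grayMap {n : ℕ} (x : Fin n → DualNumber (ZMod 2)) : (Fin n ⊕ Fin n) → ZMod 2 :=
  Sum.elim (fun i => TrivSqZeroExt.snd (x i))
    (fun i => TrivSqZeroExt.fst (x i) + TrivSqZeroExt.snd (x i))


open TrivSqZeroExt in
lemma mem_dualCode {K : Type*} [CommRing K] {ι : Type*} [Fintype ι]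
    (C : Submodule K (ι → K)) (x : ι → K) :
    x ∈ dualCode C ↔ ∀ y ∈ C, ∑ i, x i * y i = 0 := Iff.rfl

open TrivSqZeroExt in
lemma gray_key1 {n : ℕ} (x y : Fin n → DualNumber (ZMod 2)) :
    ∑ s, grayMap x s * grayMap y s =
      TrivSqZeroExt.fst (∑ i, x i * y i) + TrivSqZeroExt.snd (∑ i, x i * y i) := by
  rw [fst_sum, snd_sum, Fintype.sum_sum_type, ← Finset.sum_add_distrib,
    ← Finset.sum_add_distrib]
  refine Finset.sum_congr rfl fun i _ => ?_
  simp only [grayMap, Sum.elim_inl, Sum.elim_inr, fst_mul, snd_mul, smul_eq_mul,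
    op_smul_eq_mul]
  generalize fst (x i) = a; generalize snd (x i) = b
  generalize fst (y i) = c; generalize snd (y i) = d
  revert a b c d; decide

open TrivSqZeroExt in
lemma gray_key2 {n : ℕ} (x y : Fin n → DualNumber (ZMod 2)) :
    ∑ s, grayMap x s * grayMap (fun i => DualNumber.eps * y i) s =
      TrivSqZeroExt.fst (∑ i, x i * y i) := by
  rw [fst_sum, Fintype.sum_sum_type, ← Finset.sum_add_distrib]
  refine Finset.sum_congr rfl fun i _ => ?_
  simp only [grayMap, Sum.elim_inl, Sum.elim_inr, fst_mul, snd_mul, smul_eq_mul,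
    op_smul_eq_mul, DualNumber.eps, fst_inr, snd_inr]
  generalize fst (x i) = a; generalize snd (x i) = b
  generalize fst (y i) = c; generalize snd (y i) = d
  revert a b c d; decide

lemma gray_add {n : ℕ} (x y : Fin n → DualNumber (ZMod 2)) :
    grayMap (x + y) = grayMap x + grayMap y := by
  funext s; cases s <;> simp [grayMap, Pi.add_apply] <;> abel

/-- the Gray image of a self-dual code over `F₂ + uF₂` of length `n`
is a self-dual binary code of length `2n`. -/
theorem grayMap_selfDual {n : ℕ}
    (C : Submodule (DualNumber (ZMod 2)) (Fin n → DualNumber (ZMod 2)))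
    (hsd : C = dualCode C) :
    ∃ D : Submodule (ZMod 2) ((Fin n ⊕ Fin n) → ZMod 2),
      (D : Set ((Fin n ⊕ Fin n) → ZMod 2)) = grayMap '' (C : Set _) ∧
      D = dualCode D := by
  have h2 : ∀ a : ZMod 2, a + a = 0 := by decide
  have hc01 : ∀ c : ZMod 2, c = 0 ∨ c = 1 := by decide
  refine ⟨{ carrier := grayMap '' (C : Set _)
            zero_mem' := ⟨0, C.zero_mem, by funext s; cases s <;> simp [grayMap]⟩
            add_mem' := ?_
            smul_mem' := ?_ }, rfl, ?_⟩
  · rintro a b ⟨x, hx, rfl⟩ ⟨y, hy, rfl⟩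
    exact ⟨x + y, C.add_mem hx hy, gray_add x y⟩
  · rintro c a ⟨x, hx, rfl⟩
    rcases hc01 c with rfl | rfl
    · exact ⟨0, C.zero_mem, by funext s; cases s <;> simp [grayMap]⟩
    · exact ⟨x, hx, by rw [one_smul]⟩
  · apply le_antisymm
    · rintro a ⟨x, hx, rfl⟩
      rw [mem_dualCode]
      rintro b ⟨y, hy, rfl⟩
      have hx' : x ∈ dualCode C := hsd ▸ hx
      rw [gray_key1, (mem_dualCode C x).mp hx' y hy]
      simp
    · intro w hw
      set z : Fin n → DualNumber (ZMod 2) :=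
        fun i => TrivSqZeroExt.inl (w (Sum.inr i) + w (Sum.inl i)) +
          TrivSqZeroExt.inr (w (Sum.inl i)) with hz
      have hgz : grayMap z = w := by
        funext s
        cases s with
        | inl i => simp [grayMap, hz]
        | inr i =>
          simp only [grayMap, Sum.elim_inr, hz, TrivSqZeroExt.fst_add,
            TrivSqZeroExt.snd_add, TrivSqZeroExt.fst_inl, TrivSqZeroExt.fst_inr,
            TrivSqZeroExt.snd_inl, TrivSqZeroExt.snd_inr, add_zero, zero_add]
          rw [add_assoc, h2, add_zero]
      have hzC : z ∈ C := by
        rw [hsd, mem_dualCode]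
        intro y hy
        have hyD : grayMap y ∈ grayMap '' (C : Set _) := ⟨y, hy, rfl⟩
        have hεy : (fun i => DualNumber.eps * y i) ∈ C := by
          have := C.smul_mem (DualNumber.eps : DualNumber (ZMod 2)) hy
          convert this using 1
          rfl
        have hεyD : grayMap (fun i => DualNumber.eps * y i) ∈ grayMap '' (C : Set _) :=
          ⟨_, hεy, rfl⟩
        have e1 : TrivSqZeroExt.fst (∑ i, z i * y i) = 0 := by
          rw [← gray_key2 z y, hgz]
          exact hw _ hεyD
        have e2 : TrivSqZeroExt.fst (∑ i, z i * y i) +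
            TrivSqZeroExt.snd (∑ i, z i * y i) = 0 := by
          rw [← gray_key1 z y, hgz]
          exact hw _ hyD
        rw [e1, zero_add] at e2
        exact TrivSqZeroExt.ext e1 e2
      exact ⟨z, hzC, hgz⟩
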